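/- arXiv:1811.05595 — 4 statements merged into one kernel-verified Lean document; each statement's English description precedes it below -/
import Mathlib

section
/- Let ε > 0 and θ ∈ ℝ. Let q, a, s be real random variables with q ≥ 0 almost surely, a and s bounded almost surely, the pair (a, s) independent of q, and E[e^{θεq}] < ∞. Define q⁺ := max(q + a − s, 0) and u := q⁺ − (q + a − s). If q⁺ is identically distributed with q, then E[e^{θεq}]·(1 − E[e^{θε(a−s)}]) = 1 − E[e^{−θεu}]. -/
open MeasureTheory ProbabilityTheory

/-- All-traffic MGF identity for the single server queue: with
`q⁺ = max(q + a − s, 0)`, `u = q⁺ − (q + a − s)` and `q⁺` distributed as `q`,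
`E[e^{θεq}] (1 − E[e^{θε(a−s)}]) = 1 − E[e^{−θεu}]`. -/
theorem stmt3 {Ω : Type*} [MeasurableSpace Ω] (P : Measure Ω) [IsProbabilityMeasure P]
    (ε θ : ℝ) (hε : 0 < ε)
    (q a s : Ω → ℝ)
    (hmq : Measurable q) (hma : Measurable a) (hms : Measurable s)
    (hq0 : ∀ᵐ ω ∂P, 0 ≤ q ω)
    (Ca Cs : ℝ)
    (ha_bdd : ∀ᵐ ω ∂P, |a ω| ≤ Ca) (hs_bdd : ∀ᵐ ω ∂P, |s ω| ≤ Cs)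
    (hindep : IndepFun (fun ω => (a ω, s ω)) q P)
    (hmgf : Integrable (fun ω => Real.exp (θ * ε * q ω)) P)
    (hstat : Measure.map (fun ω => max (q ω + a ω - s ω) 0) P = Measure.map q P) :
    (∫ ω, Real.exp (θ * ε * q ω) ∂P)
        * (1 - ∫ ω, Real.exp (θ * ε * (a ω - s ω)) ∂P)
      = 1 - ∫ ω, Real.exp (-(θ * ε)
          * (max (q ω + a ω - s ω) 0 - (q ω + a ω - s ω))) ∂P := by
  set t := θ * ε with ht
  set C := Real.exp (|t| * (Ca + Cs)) with hC
  -- a.e. bound on exp(t*(a-s)) and its variants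
  have hbound : ∀ᵐ ω ∂P, |a ω - s ω| ≤ Ca + Cs := by
    filter_upwards [ha_bdd, hs_bdd] with ω h1 h2
    calc |a ω - s ω| ≤ |a ω| + |s ω| := abs_sub _ _
      _ ≤ Ca + Cs := add_le_add h1 h2
  have hexp_le : ∀ (x : ℝ), |x| ≤ Ca + Cs → ∀ c : ℝ, |c| ≤ |t| →
      Real.exp (c * x) ≤ C := by
    intro x hx c hc
    rw [hC]
    apply Real.exp_le_exp.2
    calc c * x ≤ |c * x| := le_abs_self _
      _ = |c| * |x| := abs_mul _ _
      _ ≤ |t| * (Ca + Cs) := by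
          apply mul_le_mul hc hx (abs_nonneg _)
          exact abs_nonneg _
  -- measurability
  have hmas : Measurable fun ω => a ω - s ω := hma.sub hms
  have hmqas : Measurable fun ω => q ω + a ω - s ω := (hmq.add hma).sub hms
  have hm1 : Measurable fun ω => Real.exp (t * (a ω - s ω)) :=
    (hmas.const_mul t).exp
  have hm2 : Measurable fun ω => Real.exp (t * (q ω + a ω - s ω)) :=
    (hmqas.const_mul t).exp
  have hm3 : Measurable fun ω =>
      Real.exp (-t * (max (q ω + a ω - s ω) 0 - (q ω + a ω - s ω))) :=
    (((hmqas.max measurable_const).sub hmqas).const_mul (-t)).exp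
  -- integrabilities
  have hi1 : Integrable (fun ω => Real.exp (t * (a ω - s ω))) P := by
    apply Integrable.mono' (integrable_const C) hm1.aestronglyMeasurable
    filter_upwards [hbound] with ω h
    rw [Real.norm_eq_abs, abs_of_pos (Real.exp_pos _)]
    exact hexp_le _ h t le_rfl
  have hi2 : Integrable (fun ω => Real.exp (t * (q ω + a ω - s ω))) P := by
    apply Integrable.mono' (hmgf.const_mul C) hm2.aestronglyMeasurable
    filter_upwards [hbound] with ω h
    rw [Real.norm_eq_abs, abs_of_pos (Real.exp_pos _)]
    have : t * (q ω + a ω - s ω) = t * q ω + t * (a ω - s ω) := by ring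
    rw [this, Real.exp_add]
    rw [mul_comm C]
    exact mul_le_mul_of_nonneg_left (hexp_le _ h t le_rfl) (Real.exp_pos _).le
  have hi3 : Integrable (fun ω =>
      Real.exp (-t * (max (q ω + a ω - s ω) 0 - (q ω + a ω - s ω)))) P := by
    apply Integrable.mono' (integrable_const C) hm3.aestronglyMeasurable
    filter_upwards [hbound, hq0] with ω h hq
    rw [Real.norm_eq_abs, abs_of_pos (Real.exp_pos _)]
    have hu0 : 0 ≤ max (q ω + a ω - s ω) 0 - (q ω + a ω - s ω) :=
      sub_nonneg.2 (le_max_left _ _)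
    have hu1 : max (q ω + a ω - s ω) 0 - (q ω + a ω - s ω) ≤ Ca + Cs := by
      rcases le_or_gt 0 (q ω + a ω - s ω) with hx | hx
      · rw [max_eq_left hx]; simp
        linarith [abs_nonneg (a ω - s ω)]
      · rw [max_eq_right hx.le]
        have := abs_le.1 h
        linarith
    have : |max (q ω + a ω - s ω) 0 - (q ω + a ω - s ω)| ≤ Ca + Cs := by
      rw [abs_of_nonneg hu0]; exact hu1
    exact hexp_le _ this (-t) (by simp)
  -- independence of the transformed functions
  have hindep' : IndepFun (fun ω => Real.exp (t * (a ω - s ω)))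
      (fun ω => Real.exp (t * q ω)) P := by
    have := hindep.comp (φ := fun p : ℝ × ℝ => Real.exp (t * (p.1 - p.2)))
      (ψ := fun x : ℝ => Real.exp (t * x))
      (((measurable_fst.sub measurable_snd).const_mul t).exp)
      ((measurable_id.const_mul t).exp)
    exact this
  -- product formula
  have hprod : ∫ ω, Real.exp (t * (q ω + a ω - s ω)) ∂P
      = (∫ ω, Real.exp (t * (a ω - s ω)) ∂P) * ∫ ω, Real.exp (t * q ω) ∂P := by
    have := IndepFun.integral_mul_eq_mul_integral hindep' hm1.aestronglyMeasurable
      ((hmq.const_mul t).exp).aestronglyMeasurable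
    rw [← this]
    apply integral_congr_ae
    filter_upwards with ω
    simp only [Pi.mul_apply, ← Real.exp_add]
    ring_nf
  -- stationarity
  have hmexp : Measurable fun x : ℝ => Real.exp (t * x) := Real.measurable_exp.comp (measurable_id.const_mul t)
  have hstat' : ∫ ω, Real.exp (t * max (q ω + a ω - s ω) 0) ∂P
      = ∫ ω, Real.exp (t * q ω) ∂P := by
    have h1 : ∫ ω, Real.exp (t * max (q ω + a ω - s ω) 0) ∂P
        = ∫ x, Real.exp (t * x) ∂(Measure.map (fun ω => max (q ω + a ω - s ω) 0) P) := by
      rw [integral_map (hmqas.max measurable_const).aemeasurable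
        hmexp.aestronglyMeasurable]
    have h2 : ∫ x, Real.exp (t * x) ∂(Measure.map q P) = ∫ ω, Real.exp (t * q ω) ∂P := by
      rw [integral_map hmq.aemeasurable hmexp.aestronglyMeasurable]
    rw [h1, hstat, h2]
  -- pointwise decomposition
  have hpt : ∀ ω, Real.exp (t * max (q ω + a ω - s ω) 0)
      = Real.exp (t * (q ω + a ω - s ω)) + 1
        - Real.exp (-t * (max (q ω + a ω - s ω) 0 - (q ω + a ω - s ω))) := by
    intro ω
    rcases le_or_gt 0 (q ω + a ω - s ω) with hx | hx
    · rw [max_eq_left hx]; simp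
    · rw [max_eq_right hx.le]
      simp [Real.exp_zero]
      ring_nf
  have hsum : ∫ ω, Real.exp (t * max (q ω + a ω - s ω) 0) ∂P
      = (∫ ω, Real.exp (t * (q ω + a ω - s ω)) ∂P) + 1
        - ∫ ω, Real.exp (-t * (max (q ω + a ω - s ω) 0 - (q ω + a ω - s ω))) ∂P := by
    simp_rw [hpt]
    rw [integral_sub _ hi3, integral_add hi2 (integrable_const 1)]
    · simp
    · exact hi2.add (integrable_const 1)
  rw [hstat', hprod] at hsum
  have : -t = -(θ * ε) := by rw [ht]
  rw [this] at hsum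
  ring_nf
  ring_nf at hsum
  linarith
end

section
/- Fix constants μ > 0, σ_a, σ_s ≥ 0 with σ_a² + σ_s² > 0, and A_max, S_max > 0. For each ε ∈ (0, μ), let q_ε, a_ε, s_ε be real random variables such that: q_ε ≥ 0 a.s.; 0 ≤ a_ε ≤ A_max and 0 ≤ s_ε ≤ S_max a.s.; the pair (a_ε, s_ε) is independent of q_ε and a_ε is independent of s_ε; E[a_ε] = μ − ε, E[s_ε] = μ, Var(s_ε) = σ_s², and Var(a_ε) → σ_a² as ε → 0⁺; q_ε⁺ := max(q_ε + a_ε − s_ε, 0) is identically distributed with q_ε; and there exists Θ > 0, independent of ε, with E[exp(θ ε q_ε)] < ∞ for all |θ| ≤ Θ. Then for every θ with |θ| ≤ Θ and θ·(σ_a² + σ_s²)/2 < 1, lim_{ε→0⁺} E[e^{θ ε q_ε}] = 1/(1 − θ(σ_a² + σ_s²)/2). -/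
open MeasureTheory ProbabilityTheory Filter Topology

lemma exp_quad_bound {x : ℝ} (hx : |x| ≤ 1) :
    |Real.exp x - (1 + x + x ^ 2 / 2)| ≤ |x| ^ 3 := by
  have h := Real.exp_bound hx (n := 3) (by norm_num)
  have hs : ∑ m ∈ Finset.range 3, x ^ m / m.factorial = 1 + x + x ^ 2 / 2 := by
    simp [Finset.sum_range_succ]
  rw [hs] at h
  calc |Real.exp x - (1 + x + x ^ 2 / 2)|
      ≤ |x| ^ 3 * ((3:ℕ).succ / ((3:ℕ).factorial * 3)) := h
    _ ≤ |x| ^ 3 := by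
        have h1 : (((3:ℕ).succ : ℝ) / (((3:ℕ).factorial : ℝ) * 3)) ≤ 1 := by
          norm_num [Nat.factorial]
        nlinarith [pow_nonneg (abs_nonneg x) 3]

lemma int_of_bdd {α : Type} [MeasurableSpace α] {P : Measure α} [IsProbabilityMeasure P]
    {f : α → ℝ} (hf : AEStronglyMeasurable f P) {C : ℝ} (h : ∀ᵐ ω ∂P, |f ω| ≤ C) :
    Integrable f P :=
  Integrable.mono' (integrable_const C) hf (by simpa [Real.norm_eq_abs] using h)

lemma int_q_of_mgf {α : Type} [MeasurableSpace α] {P : Measure α} [IsProbabilityMeasure P]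
    {f : α → ℝ} (hmf : Measurable f) {c : ℝ} (hc : 0 < c)
    (h0 : ∀ᵐ ω ∂P, 0 ≤ f ω)
    (h : Integrable (fun ω => Real.exp (c * f ω)) P) :
    Integrable f P := by
  refine Integrable.mono' (h.div_const c) hmf.aestronglyMeasurable ?_
  filter_upwards [h0] with ω hω
  rw [Real.norm_eq_abs, abs_of_nonneg hω, le_div_iff₀ hc]
  have := Real.add_one_le_exp (c * f ω)
  nlinarith

lemma exp_max_identity (c z : ℝ) :
    Real.exp (c * max z 0)
      = Real.exp (c * z) + 1 - Real.exp (-(c * (max z 0 - z))) := by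
  rcases le_total 0 z with h | h
  · rw [max_eq_left h]; simp
  · rw [max_eq_right h]
    have h' : -(c * (0 - z)) = c * z := by ring
    rw [h']; simp

lemma second_moment {α : Type} [MeasurableSpace α] {P : Measure α} [IsProbabilityMeasure P]
    {a s : α → ℝ} (hma : Measurable a) (hms : Measurable s)
    {Amax Smax ma ms : ℝ}
    (ha : ∀ᵐ ω ∂P, a ω ∈ Set.Icc 0 Amax) (hs : ∀ᵐ ω ∂P, s ω ∈ Set.Icc 0 Smax)
    (hind : IndepFun a s P) (hEa : ∫ ω, a ω ∂P = ma) (hEs : ∫ ω, s ω ∂P = ms) :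
    ∫ ω, (a ω - s ω) ^ 2 ∂P
      = (∫ ω, (a ω - ma) ^ 2 ∂P) + (∫ ω, (s ω - ms) ^ 2 ∂P) + (ma - ms) ^ 2 := by
  have haC : ∀ᵐ ω ∂P, |a ω - ma| ≤ Amax + |ma| := by
    filter_upwards [ha] with ω h
    rcases abs_cases ma with ⟨h1, h2⟩ | ⟨h1, h2⟩ <;> rw [abs_le] <;>
      exact ⟨by linarith [h.1, h.2], by linarith [h.1, h.2]⟩
  have hsC : ∀ᵐ ω ∂P, |s ω - ms| ≤ Smax + |ms| := by
    filter_upwards [hs] with ω h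
    rcases abs_cases ms with ⟨h1, h2⟩ | ⟨h1, h2⟩ <;> rw [abs_le] <;>
      exact ⟨by linarith [h.1, h.2], by linarith [h.1, h.2]⟩
  have hmA : Measurable (fun ω => a ω - ma) := hma.sub measurable_const
  have hmS : Measurable (fun ω => s ω - ms) := hms.sub measurable_const
  have intA : Integrable (fun ω => a ω - ma) P := int_of_bdd hmA.aestronglyMeasurable haC
  have intS : Integrable (fun ω => s ω - ms) P := int_of_bdd hmS.aestronglyMeasurable hsC
  have intA2 : Integrable (fun ω => (a ω - ma) ^ 2) P := by
    refine int_of_bdd ((hmA.pow_const 2).aestronglyMeasurable) (C := (Amax + |ma|) ^ 2) ?_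
    filter_upwards [haC] with ω h
    rw [abs_pow]
    exact pow_le_pow_left₀ (abs_nonneg _) h 2
  have intS2 : Integrable (fun ω => (s ω - ms) ^ 2) P := by
    refine int_of_bdd ((hmS.pow_const 2).aestronglyMeasurable) (C := (Smax + |ms|) ^ 2) ?_
    filter_upwards [hsC] with ω h
    rw [abs_pow]
    exact pow_le_pow_left₀ (abs_nonneg _) h 2
  have intAS : Integrable (fun ω => (a ω - ma) * (s ω - ms)) P := by
    refine int_of_bdd ((hmA.mul hmS).aestronglyMeasurable)
      (C := (Amax + |ma|) * (Smax + |ms|)) ?_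
    filter_upwards [haC, hsC] with ω h1 h2
    rw [abs_mul]
    exact mul_le_mul h1 h2 (abs_nonneg _) (le_trans (abs_nonneg _) h1)
  have hA0 : ∫ ω, (a ω - ma) ∂P = 0 := by
    rw [integral_sub (int_of_bdd hma.aestronglyMeasurable
      (by filter_upwards [ha] with ω h; rw [abs_of_nonneg h.1]; exact h.2))
      (integrable_const ma), hEa]
    simp
  have hS0 : ∫ ω, (s ω - ms) ∂P = 0 := by
    rw [integral_sub (int_of_bdd hms.aestronglyMeasurable
      (by filter_upwards [hs] with ω h; rw [abs_of_nonneg h.1]; exact h.2))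
      (integrable_const ms), hEs]
    simp
  have hindAS : IndepFun (fun ω => a ω - ma) (fun ω => s ω - ms) P :=
    hind.comp (measurable_id.sub measurable_const) (measurable_id.sub measurable_const)
  have hAS : ∫ ω, (a ω - ma) * (s ω - ms) ∂P = 0 := by
    have h := hindAS.integral_mul_eq_mul_integral intA.aestronglyMeasurable intS.aestronglyMeasurable
    calc ∫ ω, (a ω - ma) * (s ω - ms) ∂P
        = ∫ ω, ((fun ω => a ω - ma) * fun ω => s ω - ms) ω ∂P := rfl
      _ = 0 := by rw [h, hA0, hS0, mul_zero]
  have hpt : (fun ω => (a ω - s ω) ^ 2)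
      = fun ω => (a ω - ma) ^ 2 + ((s ω - ms) ^ 2 + ((-2) * ((a ω - ma) * (s ω - ms))
        + ((2 * (ma - ms)) * (a ω - ma) + ((-2 * (ma - ms)) * (s ω - ms) + (ma - ms) ^ 2)))) := by
    funext ω; ring
  have j5 : Integrable (fun ω => (-2 * (ma - ms)) * (s ω - ms) + (ma - ms) ^ 2) P := by
    exact (intS.const_mul _).add (integrable_const _)
  have j4 : Integrable (fun ω => (2 * (ma - ms)) * (a ω - ma)
      + ((-2 * (ma - ms)) * (s ω - ms) + (ma - ms) ^ 2)) P := by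
    exact (intA.const_mul _).add j5
  have j3 : Integrable (fun ω => (-2) * ((a ω - ma) * (s ω - ms))
      + ((2 * (ma - ms)) * (a ω - ma)
      + ((-2 * (ma - ms)) * (s ω - ms) + (ma - ms) ^ 2))) P := by
    exact (intAS.const_mul _).add j4
  have j2 : Integrable (fun ω => (s ω - ms) ^ 2 + ((-2) * ((a ω - ma) * (s ω - ms))
      + ((2 * (ma - ms)) * (a ω - ma)
      + ((-2 * (ma - ms)) * (s ω - ms) + (ma - ms) ^ 2)))) P := by
    exact intS2.add j3
  rw [hpt, integral_add intA2 j2, integral_add intS2 j3,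
    integral_add (show Integrable (fun ω => (-2 : ℝ) * ((a ω - ma) * (s ω - ms))) P from
      intAS.const_mul _) j4,
    integral_add (show Integrable (fun ω => (2 * (ma - ms)) * (a ω - ma)) P from
      intA.const_mul _) j5,
    integral_add (show Integrable (fun ω => (-2 * (ma - ms)) * (s ω - ms)) P from
      intS.const_mul _) (integrable_const _),
    integral_const_mul _ _, integral_const_mul _ _, integral_const_mul _ _, hA0, hS0, hAS,
    integral_const]
  simp
  ring

lemma mgf_expand2 {α : Type} [MeasurableSpace α] {P : Measure α} [IsProbabilityMeasure P]
    {X : α → ℝ} (hm : Measurable X) {B t : ℝ} (hB0 : 0 ≤ B)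
    (hB : ∀ᵐ ω ∂P, |X ω| ≤ B) (ht : |t| * B ≤ 1) :
    |(∫ ω, Real.exp (t * X ω) ∂P)
      - (1 + t * (∫ ω, X ω ∂P) + t ^ 2 / 2 * ∫ ω, X ω ^ 2 ∂P)| ≤ |t| ^ 3 * B ^ 3 := by
  have intX : Integrable X P := int_of_bdd hm.aestronglyMeasurable hB
  have intX2 : Integrable (fun ω => X ω ^ 2) P := by
    refine int_of_bdd ((hm.pow_const 2).aestronglyMeasurable) (C := B ^ 2) ?_
    filter_upwards [hB] with ω h
    rw [abs_pow]
    exact pow_le_pow_left₀ (abs_nonneg _) h 2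
  have intE : Integrable (fun ω => Real.exp (t * X ω)) P := by
    refine int_of_bdd ((Real.measurable_exp.comp (measurable_const.mul hm)).aestronglyMeasurable)
      (C := Real.exp (|t| * B)) ?_
    filter_upwards [hB] with ω h
    rw [abs_of_pos (Real.exp_pos _)]
    refine Real.exp_le_exp.2 (le_trans (le_abs_self _) ?_)
    rw [abs_mul]
    exact mul_le_mul_of_nonneg_left h (abs_nonneg t)
  have k1 : Integrable (fun ω => t * X ω) P := intX.const_mul t
  have k2 : Integrable (fun ω => t ^ 2 / 2 * X ω ^ 2) P := by exact intX2.const_mul _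
  have k12 : Integrable (fun ω => 1 + t * X ω) P := by exact (integrable_const 1).add k1
  have intpoly : Integrable (fun ω => 1 + t * X ω + t ^ 2 / 2 * X ω ^ 2) P := by
    exact k12.add k2
  have hrw : (∫ ω, Real.exp (t * X ω) ∂P)
      - (1 + t * (∫ ω, X ω ∂P) + t ^ 2 / 2 * ∫ ω, X ω ^ 2 ∂P)
      = ∫ ω, (Real.exp (t * X ω) - (1 + t * X ω + t ^ 2 / 2 * X ω ^ 2)) ∂P := by
    rw [integral_sub intE intpoly, integral_add k12 k2,
      integral_add (integrable_const 1) k1,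
      integral_const, integral_const_mul _ _, integral_const_mul _ _]
    simp
  rw [hrw]
  have hae : ∀ᵐ ω ∂P, ‖Real.exp (t * X ω) - (1 + t * X ω + t ^ 2 / 2 * X ω ^ 2)‖
      ≤ |t| ^ 3 * B ^ 3 := by
    filter_upwards [hB] with ω h
    have habs : |t * X ω| ≤ 1 := by
      rw [abs_mul]
      calc |t| * |X ω| ≤ |t| * B := mul_le_mul_of_nonneg_left h (abs_nonneg t)
        _ ≤ 1 := ht
    have h2 := exp_quad_bound habs
    have e1 : (1 : ℝ) + t * X ω + t ^ 2 / 2 * X ω ^ 2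
        = 1 + t * X ω + (t * X ω) ^ 2 / 2 := by ring
    rw [Real.norm_eq_abs, e1]
    calc |Real.exp (t * X ω) - (1 + t * X ω + (t * X ω) ^ 2 / 2)|
        ≤ |t * X ω| ^ 3 := h2
      _ = |t| ^ 3 * |X ω| ^ 3 := by rw [abs_mul, mul_pow]
      _ ≤ |t| ^ 3 * B ^ 3 := by
          exact mul_le_mul_of_nonneg_left (pow_le_pow_left₀ (abs_nonneg _) h 3)
            (pow_nonneg (abs_nonneg t) 3)
  calc |∫ ω, (Real.exp (t * X ω) - (1 + t * X ω + t ^ 2 / 2 * X ω ^ 2)) ∂P|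
      ≤ |t| ^ 3 * B ^ 3 * (P Set.univ).toReal := by
        exact norm_integral_le_of_norm_le_const hae
    _ = |t| ^ 3 * B ^ 3 := by simp

lemma mgf_expand1 {α : Type} [MeasurableSpace α] {P : Measure α} [IsProbabilityMeasure P]
    {Y : α → ℝ} (hm : Measurable Y) {C t : ℝ} (hC0 : 0 ≤ C)
    (hY : ∀ᵐ ω ∂P, Y ω ∈ Set.Icc 0 C) (ht : |t| * C ≤ 1) :
    |(∫ ω, Real.exp (t * Y ω) ∂P) - (1 + t * ∫ ω, Y ω ∂P)|
      ≤ t ^ 2 * C * ∫ ω, Y ω ∂P := by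
  have hYabs : ∀ᵐ ω ∂P, |Y ω| ≤ C := by
    filter_upwards [hY] with ω h; rw [abs_of_nonneg h.1]; exact h.2
  have intY : Integrable Y P := int_of_bdd hm.aestronglyMeasurable hYabs
  have intE : Integrable (fun ω => Real.exp (t * Y ω)) P := by
    refine int_of_bdd ((Real.measurable_exp.comp (measurable_const.mul hm)).aestronglyMeasurable)
      (C := Real.exp (|t| * C)) ?_
    filter_upwards [hYabs] with ω h
    rw [abs_of_pos (Real.exp_pos _)]
    refine Real.exp_le_exp.2 (le_trans (le_abs_self _) ?_)
    rw [abs_mul]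
    exact mul_le_mul_of_nonneg_left h (abs_nonneg t)
  have hrw : (∫ ω, Real.exp (t * Y ω) ∂P) - (1 + t * ∫ ω, Y ω ∂P)
      = ∫ ω, (Real.exp (t * Y ω) - (1 + t * Y ω)) ∂P := by
    have k1 : Integrable (fun ω => t * Y ω) P := intY.const_mul t
    have k12 : Integrable (fun ω => 1 + t * Y ω) P := by exact (integrable_const 1).add k1
    rw [integral_sub intE k12, integral_add (integrable_const 1) k1, integral_const,
      integral_const_mul _ _]
    simp
  rw [hrw]
  have hg : Integrable (fun ω => Real.exp (t * Y ω) - (1 + t * Y ω)) P := by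
    exact intE.sub ((integrable_const 1).add (intY.const_mul t))
  calc |∫ ω, (Real.exp (t * Y ω) - (1 + t * Y ω)) ∂P|
      ≤ ∫ ω, |Real.exp (t * Y ω) - (1 + t * Y ω)| ∂P := by
        simpa [Real.norm_eq_abs] using norm_integral_le_integral_norm
          (fun ω => Real.exp (t * Y ω) - (1 + t * Y ω)) (μ := P)
    _ ≤ ∫ ω, t ^ 2 * C * Y ω ∂P := by
        refine integral_mono_ae hg.abs ((intY.const_mul _)) ?_
        filter_upwards [hY] with ω h
        have habs : |t * Y ω| ≤ 1 := by
          rw [abs_mul]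
          calc |t| * |Y ω| ≤ |t| * C := by
                refine mul_le_mul_of_nonneg_left ?_ (abs_nonneg t)
                rw [abs_of_nonneg h.1]; exact h.2
            _ ≤ 1 := ht
        have h2 := Real.abs_exp_sub_one_sub_id_le habs
        have e1 : Real.exp (t * Y ω) - (1 + t * Y ω)
            = Real.exp (t * Y ω) - 1 - t * Y ω := by ring
        rw [e1]
        calc |Real.exp (t * Y ω) - 1 - t * Y ω| ≤ (t * Y ω) ^ 2 := h2
          _ ≤ t ^ 2 * C * Y ω := by
              nlinarith [h.1, h.2, sq_nonneg t,
                mul_nonneg (mul_nonneg (sq_nonneg t) h.1) (sub_nonneg.2 h.2)]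
    _ = t ^ 2 * C * ∫ ω, Y ω ∂P := integral_const_mul _ _

lemma mean_slack {α : Type} [MeasurableSpace α] {P : Measure α} [IsProbabilityMeasure P]
    {q a s : α → ℝ} (hmq : Measurable q) (hma : Measurable a) (hms : Measurable s)
    {Amax Smax ma ms : ℝ}
    (hq0 : ∀ᵐ ω ∂P, 0 ≤ q ω)
    (ha : ∀ᵐ ω ∂P, a ω ∈ Set.Icc 0 Amax) (hs : ∀ᵐ ω ∂P, s ω ∈ Set.Icc 0 Smax)
    (hstat : Measure.map (fun ω => max (q ω + a ω - s ω) 0) P = Measure.map q P)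
    (hq_int : Integrable q P) (hEa : ∫ ω, a ω ∂P = ma) (hEs : ∫ ω, s ω ∂P = ms) :
    ∫ ω, (max (q ω + a ω - s ω) 0 - (q ω + a ω - s ω)) ∂P = ms - ma := by
  have inta : Integrable a P := int_of_bdd hma.aestronglyMeasurable
    (by filter_upwards [ha] with ω h; rw [abs_of_nonneg h.1]; exact h.2)
  have ints : Integrable s P := int_of_bdd hms.aestronglyMeasurable
    (by filter_upwards [hs] with ω h; rw [abs_of_nonneg h.1]; exact h.2)
  have intz : Integrable (fun ω => q ω + a ω - s ω) P := (hq_int.add inta).sub ints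
  have hmz : Measurable (fun ω => q ω + a ω - s ω) := (hmq.add hma).sub hms
  have hmzp : Measurable (fun ω => max (q ω + a ω - s ω) 0) := hmz.max measurable_const
  have intzp : Integrable (fun ω => max (q ω + a ω - s ω) 0) P := by
    refine Integrable.mono' (hq_int.add (integrable_const Amax))
      hmzp.aestronglyMeasurable ?_
    filter_upwards [hq0, ha, hs] with ω h0 h1 h2
    simp only [Pi.add_apply]
    rw [Real.norm_eq_abs, abs_of_nonneg (le_max_right _ _)]
    exact max_le (by linarith [h1.1, h1.2, h2.1, h2.2, h0])
      (by linarith [h1.1, h1.2, h2.1, h2.2, h0])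
  have hEzp : ∫ ω, max (q ω + a ω - s ω) 0 ∂P = ∫ ω, q ω ∂P := by
    calc ∫ ω, max (q ω + a ω - s ω) 0 ∂P
        = ∫ x, x ∂(Measure.map (fun ω => max (q ω + a ω - s ω) 0) P) :=
          (integral_map hmzp.aemeasurable aestronglyMeasurable_id).symm
      _ = ∫ x, x ∂(Measure.map q P) := by rw [hstat]
      _ = ∫ ω, q ω ∂P := integral_map hmq.aemeasurable aestronglyMeasurable_id
  have intqa : Integrable (fun ω => q ω + a ω) P := by exact hq_int.add inta
  rw [integral_sub intzp intz, hEzp, integral_sub intqa ints,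
    integral_add hq_int inta, hEa, hEs]
  ring

lemma key_identity {α : Type} [MeasurableSpace α] {P : Measure α} [IsProbabilityMeasure P]
    {q a s : α → ℝ} (hmq : Measurable q) (hma : Measurable a) (hms : Measurable s)
    {Amax Smax t : ℝ}
    (hq0 : ∀ᵐ ω ∂P, 0 ≤ q ω)
    (ha : ∀ᵐ ω ∂P, a ω ∈ Set.Icc 0 Amax) (hs : ∀ᵐ ω ∂P, s ω ∈ Set.Icc 0 Smax)
    (hind : IndepFun (fun ω => (a ω, s ω)) q P)
    (hstat : Measure.map (fun ω => max (q ω + a ω - s ω) 0) P = Measure.map q P)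
    (hq_int : Integrable (fun ω => Real.exp (t * q ω)) P) :
    (∫ ω, Real.exp (t * q ω) ∂P) * (1 - ∫ ω, Real.exp (t * (a ω - s ω)) ∂P)
      = 1 - ∫ ω, Real.exp (-(t * (max (q ω + a ω - s ω) 0 - (q ω + a ω - s ω)))) ∂P := by
  have hmz : Measurable (fun ω => q ω + a ω - s ω) := (hmq.add hma).sub hms
  have hmzp : Measurable (fun ω => max (q ω + a ω - s ω) 0) := hmz.max measurable_const
  have intX : Integrable (fun ω => Real.exp (t * (a ω - s ω))) P := by
    refine int_of_bdd ((Real.measurable_exp.comp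
      (measurable_const.mul (hma.sub hms))).aestronglyMeasurable)
      (C := Real.exp (|t| * (Amax + Smax))) ?_
    filter_upwards [ha, hs] with ω h1 h2
    rw [abs_of_pos (Real.exp_pos _)]
    refine Real.exp_le_exp.2 (le_trans (le_abs_self _) ?_)
    rw [abs_mul]
    refine mul_le_mul_of_nonneg_left ?_ (abs_nonneg t)
    rw [abs_le]
    exact ⟨by linarith [h1.1, h1.2, h2.1, h2.2], by linarith [h1.1, h1.2, h2.1, h2.2]⟩
  have hindexp : IndepFun (fun ω => Real.exp (t * (a ω - s ω)))
      (fun ω => Real.exp (t * q ω)) P := by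
    have h := hind.comp (φ := fun p : ℝ × ℝ => Real.exp (t * (p.1 - p.2)))
      (ψ := fun x : ℝ => Real.exp (t * x))
      (Real.measurable_exp.comp (measurable_const.mul (measurable_fst.sub measurable_snd)))
      (Real.measurable_exp.comp (measurable_const.mul measurable_id))
    exact h
  have hmul : ∫ ω, Real.exp (t * (a ω - s ω)) * Real.exp (t * q ω) ∂P
      = (∫ ω, Real.exp (t * (a ω - s ω)) ∂P) * ∫ ω, Real.exp (t * q ω) ∂P := by
    have h := hindexp.integral_mul_eq_mul_integral intX.aestronglyMeasurable hq_int.aestronglyMeasurable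
    exact h
  have intprod : Integrable (fun ω => Real.exp (t * (a ω - s ω)) * Real.exp (t * q ω)) P := by
    have h := hindexp.integrable_mul intX hq_int
    exact h
  have intY : Integrable (fun ω =>
      Real.exp (-(t * (max (q ω + a ω - s ω) 0 - (q ω + a ω - s ω))))) P := by
    refine int_of_bdd ((Real.measurable_exp.comp
      ((measurable_const.mul (hmzp.sub hmz)).neg)).aestronglyMeasurable)
      (C := Real.exp (|t| * Smax)) ?_
    filter_upwards [hq0, ha, hs] with ω h0 h1 h2
    rw [abs_of_pos (Real.exp_pos _)]
    refine Real.exp_le_exp.2 (le_trans (le_abs_self _) ?_)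
    rw [abs_neg, abs_mul]
    refine mul_le_mul_of_nonneg_left ?_ (abs_nonneg t)
    rw [abs_le]
    rcases le_total 0 (q ω + a ω - s ω) with h | h
    · rw [max_eq_left h]
      constructor <;> linarith [h2.1, h2.2]
    · rw [max_eq_right h]
      constructor <;> linarith [h0, h1.1, h1.2, h2.1, h2.2, h]
  have hstatE : ∫ ω, Real.exp (t * max (q ω + a ω - s ω) 0) ∂P
      = ∫ ω, Real.exp (t * q ω) ∂P := by
    have hsm : AEStronglyMeasurable (fun x : ℝ => Real.exp (t * x))
        (Measure.map (fun ω => max (q ω + a ω - s ω) 0) P) :=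
      (Real.continuous_exp.comp (continuous_const.mul continuous_id)).aestronglyMeasurable
    have hsm2 : AEStronglyMeasurable (fun x : ℝ => Real.exp (t * x)) (Measure.map q P) :=
      (Real.continuous_exp.comp (continuous_const.mul continuous_id)).aestronglyMeasurable
    calc ∫ ω, Real.exp (t * max (q ω + a ω - s ω) 0) ∂P
        = ∫ x, Real.exp (t * x) ∂(Measure.map (fun ω => max (q ω + a ω - s ω) 0) P) :=
          (integral_map hmzp.aemeasurable hsm).symm
      _ = ∫ x, Real.exp (t * x) ∂(Measure.map q P) := by rw [hstat]
      _ = ∫ ω, Real.exp (t * q ω) ∂P := integral_map hmq.aemeasurable hsm2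
  have hpt : ∀ ω, Real.exp (t * max (q ω + a ω - s ω) 0)
      = Real.exp (t * (a ω - s ω)) * Real.exp (t * q ω) + 1
        - Real.exp (-(t * (max (q ω + a ω - s ω) 0 - (q ω + a ω - s ω)))) := by
    intro ω
    have h1 := exp_max_identity t (q ω + a ω - s ω)
    rw [h1, ← Real.exp_add]
    congr 2
    ring
  have hsplit : ∫ ω, Real.exp (t * max (q ω + a ω - s ω) 0) ∂P
      = (∫ ω, Real.exp (t * (a ω - s ω)) * Real.exp (t * q ω) ∂P) + 1
        - ∫ ω, Real.exp (-(t * (max (q ω + a ω - s ω) 0 - (q ω + a ω - s ω)))) ∂P := by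
    have intprod1 : Integrable (fun ω =>
        Real.exp (t * (a ω - s ω)) * Real.exp (t * q ω) + 1) P := by
      exact intprod.add (integrable_const 1)
    rw [integral_congr_ae (Filter.Eventually.of_forall hpt),
      integral_sub intprod1 intY,
      integral_add intprod (integrable_const 1), integral_const]
    simp
  have hmain := hstatE.symm.trans hsplit
  rw [hmul] at hmain
  linear_combination hmain

/-- Heavy-traffic limit of the MGF of the scaled single server queue length: for
every `θ` with `|θ| ≤ Θ` and `θ(σ_a² + σ_s²)/2 < 1`,
`E[e^{θ ε q_ε}] → 1/(1 − θ(σ_a² + σ_s²)/2)` as `ε → 0⁺`. -/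
theorem stmt4
    (μ σa σs Amax Smax : ℝ)
    (hμ : 0 < μ) (hσa : 0 ≤ σa) (hσs : 0 ≤ σs)
    (hpos : 0 < σa ^ 2 + σs ^ 2) (hA : 0 < Amax) (hS : 0 < Smax)
    (Ω : ℝ → Type) [∀ ε, MeasurableSpace (Ω ε)]
    (P : ∀ ε, Measure (Ω ε)) [∀ ε, IsProbabilityMeasure (P ε)]
    (q a s : ∀ ε, Ω ε → ℝ)
    (hmq : ∀ ε, Measurable (q ε)) (hma : ∀ ε, Measurable (a ε))
    (hms : ∀ ε, Measurable (s ε))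
    (hq0 : ∀ ε ∈ Set.Ioo 0 μ, ∀ᵐ ω ∂(P ε), 0 ≤ q ε ω)
    (ha_bdd : ∀ ε ∈ Set.Ioo 0 μ, ∀ᵐ ω ∂(P ε), a ε ω ∈ Set.Icc 0 Amax)
    (hs_bdd : ∀ ε ∈ Set.Ioo 0 μ, ∀ᵐ ω ∂(P ε), s ε ω ∈ Set.Icc 0 Smax)
    (h_as_q : ∀ ε ∈ Set.Ioo 0 μ, IndepFun (fun ω => (a ε ω, s ε ω)) (q ε) (P ε))
    (h_a_s : ∀ ε ∈ Set.Ioo 0 μ, IndepFun (a ε) (s ε) (P ε))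
    (hEa : ∀ ε ∈ Set.Ioo 0 μ, ∫ ω, a ε ω ∂(P ε) = μ - ε)
    (hEs : ∀ ε ∈ Set.Ioo 0 μ, ∫ ω, s ε ω ∂(P ε) = μ)
    (hVars : ∀ ε ∈ Set.Ioo 0 μ, ∫ ω, (s ε ω - μ) ^ 2 ∂(P ε) = σs ^ 2)
    (hVara : Tendsto (fun ε => ∫ ω, (a ε ω - (μ - ε)) ^ 2 ∂(P ε)) (𝓝[>] 0)
      (𝓝 (σa ^ 2)))
    (hstat : ∀ ε ∈ Set.Ioo 0 μ,
      Measure.map (fun ω => max (q ε ω + a ε ω - s ε ω) 0) (P ε)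
        = Measure.map (q ε) (P ε))
    (Θ : ℝ) (hΘ : 0 < Θ)
    (hmgf : ∀ ε ∈ Set.Ioo 0 μ, ∀ θ : ℝ, |θ| ≤ Θ →
      Integrable (fun ω => Real.exp (θ * ε * q ε ω)) (P ε)) :
    ∀ θ : ℝ, |θ| ≤ Θ → θ * ((σa ^ 2 + σs ^ 2) / 2) < 1 →
      Tendsto (fun ε => ∫ ω, Real.exp (θ * ε * q ε ω) ∂(P ε)) (𝓝[>] 0)
        (𝓝 (1 / (1 - θ * ((σa ^ 2 + σs ^ 2) / 2)))) := by
  intro θ hθΘ hθσ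
  by_cases hθ0 : θ = 0
  · subst hθ0
    simp only [zero_mul, Real.exp_zero, integral_const, measure_univ, ENNReal.toReal_one,
      smul_eq_mul, mul_one, one_mul, zero_div]
    norm_num
  -- main case
  set B : ℝ := Amax + Smax with hBdef
  have hB0 : 0 < B := by positivity
  have hθabs : 0 < |θ| := abs_pos.2 hθ0
  set δ : ℝ := min μ ((|θ| * B)⁻¹) with hδdef
  have hδ0 : 0 < δ := lt_min hμ (by positivity)
  have hδμ : δ ≤ μ := min_le_left _ _
  have hmemδ : Set.Ioo (0:ℝ) δ ∈ 𝓝[>] (0:ℝ) :=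
    Ioo_mem_nhdsGT_of_mem ⟨le_refl 0, hδ0⟩
  -- abbreviations
  set MX : ℝ → ℝ := fun ε => ∫ ω, Real.exp (θ * ε * (a ε ω - s ε ω)) ∂(P ε) with hMX
  set EmY : ℝ → ℝ := fun ε => ∫ ω, Real.exp (-(θ * ε *
    (max (q ε ω + a ε ω - s ε ω) 0 - (q ε ω + a ε ω - s ε ω)))) ∂(P ε) with hEmY
  set νa : ℝ → ℝ := fun ε => ∫ ω, (a ε ω - (μ - ε)) ^ 2 ∂(P ε) with hνa
  -- basic per-ε facts
  have hIq : ∀ ε ∈ Set.Ioo (0:ℝ) μ, Integrable (q ε) (P ε) := by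
    intro ε hε
    exact int_q_of_mgf (hmq ε) (mul_pos hΘ hε.1) (hq0 ε hε)
      (hmgf ε hε Θ (le_of_eq (abs_of_pos hΘ)))
  have hEY : ∀ ε ∈ Set.Ioo (0:ℝ) μ,
      ∫ ω, (max (q ε ω + a ε ω - s ε ω) 0 - (q ε ω + a ε ω - s ε ω)) ∂(P ε) = ε := by
    intro ε hε
    have h := mean_slack (hmq ε) (hma ε) (hms ε) (hq0 ε hε) (ha_bdd ε hε) (hs_bdd ε hε)
      (hstat ε hε) (hIq ε hε) (hEa ε hε) (hEs ε hε)
    rw [h]; ring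
  have hID : ∀ ε ∈ Set.Ioo (0:ℝ) μ,
      (∫ ω, Real.exp (θ * ε * q ε ω) ∂(P ε)) * (1 - MX ε) = 1 - EmY ε := by
    intro ε hε
    exact key_identity (t := θ * ε) (hmq ε) (hma ε) (hms ε) (hq0 ε hε) (ha_bdd ε hε)
      (hs_bdd ε hε) (h_as_q ε hε) (hstat ε hε) (hmgf ε hε θ hθΘ)
  -- moment computations
  have hEX : ∀ ε ∈ Set.Ioo (0:ℝ) μ, ∫ ω, (a ε ω - s ε ω) ∂(P ε) = -ε := by
    intro ε hε
    have inta : Integrable (a ε) (P ε) := int_of_bdd (hma ε).aestronglyMeasurable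
      (by filter_upwards [ha_bdd ε hε] with ω h; rw [abs_of_nonneg h.1]; exact h.2)
    have ints : Integrable (s ε) (P ε) := int_of_bdd (hms ε).aestronglyMeasurable
      (by filter_upwards [hs_bdd ε hε] with ω h; rw [abs_of_nonneg h.1]; exact h.2)
    rw [integral_sub inta ints, hEa ε hε, hEs ε hε]; ring
  have hEX2 : ∀ ε ∈ Set.Ioo (0:ℝ) μ,
      ∫ ω, (a ε ω - s ε ω) ^ 2 ∂(P ε) = νa ε + σs ^ 2 + ε ^ 2 := by
    intro ε hε
    have h := second_moment (hma ε) (hms ε) (ha_bdd ε hε) (hs_bdd ε hε)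
      (h_a_s ε hε) (hEa ε hε) (hEs ε hε)
    rw [h, hVars ε hε]
    have : (μ - ε - μ) ^ 2 = ε ^ 2 := by ring
    rw [this, hνa]
  -- the small-parameter bound |θ*ε| * B ≤ 1 for ε ∈ Ioo 0 δ
  have hsmall : ∀ ε ∈ Set.Ioo (0:ℝ) δ, |θ * ε| * B ≤ 1 := by
    intro ε hε
    have h1 : ε ≤ (|θ| * B)⁻¹ := le_of_lt (lt_of_lt_of_le hε.2 (min_le_right _ _))
    rw [abs_mul, abs_of_pos hε.1]
    have h2 : |θ| * ε * B ≤ |θ| * (|θ| * B)⁻¹ * B := by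
      have := mul_le_mul_of_nonneg_left h1 (le_of_lt hθabs)
      exact mul_le_mul_of_nonneg_right this (le_of_lt hB0)
    calc |θ| * ε * B ≤ |θ| * (|θ| * B)⁻¹ * B := h2
      _ = 1 := by field_simp
  -- limits of ε and ε^2
  have h0 : Tendsto (fun ε : ℝ => ε) (𝓝[>] 0) (𝓝 0) :=
    tendsto_id.mono_left nhdsWithin_le_nhds
  have hε2 : Tendsto (fun ε : ℝ => ε ^ 2) (𝓝[>] 0) (𝓝 0) := by
    have := h0.pow 2
    simpa using this
  -- limit of the denominator base
  have hbase : Tendsto (fun ε => θ - θ ^ 2 / 2 * (νa ε + σs ^ 2 + ε ^ 2)) (𝓝[>] 0)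
      (𝓝 (θ - θ ^ 2 / 2 * (σa ^ 2 + σs ^ 2))) := by
    have h1 : Tendsto (fun ε => νa ε + σs ^ 2 + ε ^ 2) (𝓝[>] 0) (𝓝 (σa ^ 2 + σs ^ 2)) := by
      have := (hVara.add (tendsto_const_nhds (x := σs ^ 2))).add hε2
      simpa using this
    have h2 := h1.const_mul (θ ^ 2 / 2)
    have h3 := (tendsto_const_nhds (x := θ) (f := 𝓝[>] (0:ℝ))).sub h2
    simpa using h3
  -- denominator limit
  have hTD : Tendsto (fun ε => (1 - MX ε) / ε ^ 2) (𝓝[>] 0)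
      (𝓝 (θ - θ ^ 2 / 2 * (σa ^ 2 + σs ^ 2))) := by
    have hdiff : Tendsto (fun ε => (1 - MX ε) / ε ^ 2
        - (θ - θ ^ 2 / 2 * (νa ε + σs ^ 2 + ε ^ 2))) (𝓝[>] 0) (𝓝 0) := by
      apply squeeze_zero_norm' (a := fun ε => (|θ| ^ 3 * B ^ 3) * ε)
      · filter_upwards [hmemδ] with ε hε
        have hεμ : ε ∈ Set.Ioo (0:ℝ) μ := ⟨hε.1, lt_of_lt_of_le hε.2 hδμ⟩
        have hεne : (ε : ℝ) ≠ 0 := ne_of_gt hε.1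
        have hbd := mgf_expand2 (P := P ε) (X := fun ω => a ε ω - s ε ω) ((hma ε).sub (hms ε)) (le_of_lt hB0)
          (by filter_upwards [ha_bdd ε hεμ, hs_bdd ε hεμ] with ω h1 h2
              rw [abs_le]
              exact ⟨by simp only [hBdef]; linarith [h1.1, h1.2, h2.1, h2.2],
                by simp only [hBdef]; linarith [h1.1, h1.2, h2.1, h2.2]⟩)
          (hsmall ε hε)
        rw [hEX ε hεμ, hEX2 ε hεμ] at hbd
        have hkey : (1 - MX ε) / ε ^ 2 - (θ - θ ^ 2 / 2 * (νa ε + σs ^ 2 + ε ^ 2))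
            = ((1 + (θ * ε) * (-ε) + (θ * ε) ^ 2 / 2 * (νa ε + σs ^ 2 + ε ^ 2)) - MX ε)
              / ε ^ 2 := by
          field_simp
          ring
        rw [Real.norm_eq_abs, hkey, abs_div, abs_of_pos (pow_pos hε.1 2), div_le_iff₀
          (pow_pos hε.1 2)]
        have habs : |(1 + (θ * ε) * (-ε) + (θ * ε) ^ 2 / 2 * (νa ε + σs ^ 2 + ε ^ 2)) - MX ε|
            = |MX ε - (1 + (θ * ε) * (-ε) + (θ * ε) ^ 2 / 2 * (νa ε + σs ^ 2 + ε ^ 2))| :=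
          abs_sub_comm _ _
        rw [habs]
        calc |MX ε - (1 + (θ * ε) * (-ε) + (θ * ε) ^ 2 / 2 * (νa ε + σs ^ 2 + ε ^ 2))|
            ≤ |θ * ε| ^ 3 * B ^ 3 := hbd
          _ = |θ| ^ 3 * B ^ 3 * ε * ε ^ 2 := by
              rw [abs_mul, abs_of_pos hε.1, mul_pow]; ring
      · have := h0.const_mul (|θ| ^ 3 * B ^ 3)
        simpa using this
    have := hdiff.add hbase
    rw [zero_add] at this
    exact this.congr (fun ε => by ring)
  -- numerator limit
  have hTN : Tendsto (fun ε => (1 - EmY ε) / ε ^ 2) (𝓝[>] 0) (𝓝 θ) := by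
    have hdiff : Tendsto (fun ε => (1 - EmY ε) / ε ^ 2 - θ) (𝓝[>] 0) (𝓝 0) := by
      apply squeeze_zero_norm' (a := fun ε => (θ ^ 2 * Smax) * ε)
      · filter_upwards [hmemδ] with ε hε
        have hεμ : ε ∈ Set.Ioo (0:ℝ) μ := ⟨hε.1, lt_of_lt_of_le hε.2 hδμ⟩
        have hεne : (ε : ℝ) ≠ 0 := ne_of_gt hε.1
        have hYbdd : ∀ᵐ ω ∂(P ε), (max (q ε ω + a ε ω - s ε ω) 0
            - (q ε ω + a ε ω - s ε ω)) ∈ Set.Icc 0 Smax := by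
          filter_upwards [hq0 ε hεμ, ha_bdd ε hεμ, hs_bdd ε hεμ] with ω h0' h1 h2
          constructor
          · simp [le_max_left]
          · rcases le_total 0 (q ε ω + a ε ω - s ε ω) with h | h
            · rw [max_eq_left h]; linarith [h2.1, h2.2]
            · rw [max_eq_right h]; linarith [h0', h1.1, h2.2]
        have hbd := mgf_expand1 (P := P ε) (t := -(θ * ε))
          (Y := fun ω => max (q ε ω + a ε ω - s ε ω) 0 - (q ε ω + a ε ω - s ε ω))
          (((hmq ε).add (hma ε)).sub (hms ε) |>.max measurable_const |>.sub
            (((hmq ε).add (hma ε)).sub (hms ε))) (le_of_lt hS) hYbdd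
          (by rw [abs_neg]
              calc |θ * ε| * Smax ≤ |θ * ε| * B := by
                    refine mul_le_mul_of_nonneg_left ?_ (abs_nonneg _)
                    simp only [hBdef]; linarith
                _ ≤ 1 := hsmall ε hε)
        rw [hEY ε hεμ] at hbd
        have hconv : (∫ ω, Real.exp (-(θ * ε) * (max (q ε ω + a ε ω - s ε ω) 0
            - (q ε ω + a ε ω - s ε ω))) ∂(P ε)) = EmY ε := by
          simp only [hEmY, neg_mul]
        rw [hconv] at hbd
        have e1 : (1 : ℝ) + -(θ * ε) * ε = 1 - θ * ε ^ 2 := by ring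
        have e2 : (-(θ * ε)) ^ 2 * Smax * ε = θ ^ 2 * Smax * ε * ε ^ 2 := by ring
        rw [e1, e2] at hbd
        have hkey : (1 - EmY ε) / ε ^ 2 - θ = ((1 - θ * ε ^ 2) - EmY ε) / ε ^ 2 := by
          field_simp
          ring
        rw [Real.norm_eq_abs, hkey, abs_div, abs_of_pos (pow_pos hε.1 2),
          div_le_iff₀ (pow_pos hε.1 2)]
        calc |(1 - θ * ε ^ 2) - EmY ε| = |EmY ε - (1 - θ * ε ^ 2)| := abs_sub_comm _ _
          _ ≤ θ ^ 2 * Smax * ε * ε ^ 2 := hbd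
      · have := h0.const_mul (θ ^ 2 * Smax)
        simpa using this
    have := hdiff.add (tendsto_const_nhds (x := θ) (f := 𝓝[>] (0:ℝ)))
    rw [zero_add] at this
    exact this.congr (fun ε => by ring)
  -- conclusion
  have hK : 0 < 1 - θ * ((σa ^ 2 + σs ^ 2) / 2) := by linarith
  have hL : θ - θ ^ 2 / 2 * (σa ^ 2 + σs ^ 2) = θ * (1 - θ * ((σa ^ 2 + σs ^ 2) / 2)) := by
    ring
  have hLne : θ - θ ^ 2 / 2 * (σa ^ 2 + σs ^ 2) ≠ 0 := by
    rw [hL]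
    exact mul_ne_zero hθ0 (ne_of_gt hK)
  have hratio : Tendsto (fun ε => ((1 - EmY ε) / ε ^ 2) / ((1 - MX ε) / ε ^ 2)) (𝓝[>] 0)
      (𝓝 (θ / (θ - θ ^ 2 / 2 * (σa ^ 2 + σs ^ 2)))) := hTN.div hTD hLne
  have hval : θ / (θ - θ ^ 2 / 2 * (σa ^ 2 + σs ^ 2))
      = 1 / (1 - θ * ((σa ^ 2 + σs ^ 2) / 2)) := by
    rw [hL, div_eq_div_iff (mul_ne_zero hθ0 (ne_of_gt hK)) (ne_of_gt hK)]
    ring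
  rw [hval] at hratio
  have hev1 : ∀ᶠ ε in 𝓝[>] (0:ℝ), (1 - MX ε) / ε ^ 2 ≠ 0 :=
    hTD.eventually_ne hLne
  have heq : (fun ε => ((1 - EmY ε) / ε ^ 2) / ((1 - MX ε) / ε ^ 2))
      =ᶠ[𝓝[>] (0:ℝ)] (fun ε => ∫ ω, Real.exp (θ * ε * q ε ω) ∂(P ε)) := by
    filter_upwards [hev1, hmemδ] with ε h1 h2
    have hεμ : ε ∈ Set.Ioo (0:ℝ) μ := ⟨h2.1, lt_of_lt_of_le h2.2 hδμ⟩
    have hεne : (ε : ℝ) ≠ 0 := ne_of_gt h2.1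
    have hMXne : 1 - MX ε ≠ 0 := by
      intro h
      apply h1
      rw [h, zero_div]
    have hid := hID ε hεμ
    rw [← hid]
    field_simp
  exact hratio.congr' heq
end

section
/- Let n ≥ 1 and let c ∈ ℝⁿ satisfy c_i > 0 for every i. Let q, u ∈ ℝⁿ satisfy q_i u_i = 0 for every i ∈ {1, …, n}, and define q_⊥ := q − ⟨c, q⟩ c. Then for every α ∈ ℝ: Σ_{i=1}^n c_i u_i e^{−(α / c_i) q_{⊥i}} = ⟨c, u⟩ · e^{α ⟨c, q⟩}. -/
/-- If `cᵢ > 0` for all `i` and `qᵢ uᵢ = 0` for all `i`, then with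
`q_⊥ = q − ⟨c,q⟩ c`, for every real `α`:
`Σᵢ cᵢ uᵢ e^{−(α/cᵢ) q_{⊥i}} = ⟨c,u⟩ e^{α ⟨c,q⟩}`. -/
theorem stmt12 (n : ℕ) (hn : 1 ≤ n) (c q u : Fin n → ℝ)
    (hc : ∀ i, 0 < c i)
    (h : ∀ i, q i * u i = 0) (α : ℝ) :
    ∑ i, c i * u i * Real.exp (-(α / c i) * (q i - (∑ j, c j * q j) * c i))
      = (∑ i, c i * u i) * Real.exp (α * ∑ j, c j * q j) := by
  rw [Finset.sum_mul]
  refine Finset.sum_congr rfl fun i _ => ?_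
  rcases mul_eq_zero.mp (h i) with hq | hu
  · rw [hq]
    congr 1
    have : -(α / c i) * (0 - (∑ j, c j * q j) * c i) = α / c i * c i * ∑ j, c j * q j := by ring
    rw [this, div_mul_cancel₀ _ (hc i).ne']
  · simp [hu]
end

section
/- Fix n ≥ 1, a vector c ∈ ℝⁿ with c ≥ 0 componentwise and ‖c‖ = 1, and constants S_max > 0, θ* > 0, C* < ∞, ε₀ > 0. For each ε ∈ (0, ε₀), let q_ε, a_ε, s_ε be ℝⁿ-valued random vectors with q_ε ≥ 0 coordinatewise a.s.; define (q_ε⁺)_i := max((q_ε)_i + (a_ε)_i − (s_ε)_i, 0) and (u_ε)_i := (q_ε⁺)_i − ((q_ε)_i + (a_ε)_i − (s_ε)_i). Assume: 0 ≤ (u_ε)_i ≤ S_max a.s. for all i; E[⟨c, u_ε⟩] ≤ ε; q_ε⁺ is identically distributed with q_ε; and the state space collapse bound E[e^{θ* ‖(q_ε)_⊥‖}] ≤ C* holds for all ε, where (q_ε)_⊥ := q_ε − ⟨c, q_ε⟩ c. Then for every θ ∈ ℝ, E[(e^{θ ε ⟨c, q_ε⁺⟩} − 1)(e^{−θ ε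 ⟨c, u_ε⟩} − 1)] / ε² → 0 as ε → 0⁺. -/
open MeasureTheory ProbabilityTheory Filter Topology

lemma aux_abs_exp_sub_one_le (t : ℝ) : |Real.exp t - 1| ≤ |t| * Real.exp |t| := by
  rcases le_or_gt 0 t with h | h
  · rw [abs_of_nonneg h, abs_of_nonneg (by linarith [Real.one_le_exp h])]
    have h1 : (-t) + 1 ≤ Real.exp (-t) := Real.add_one_le_exp _
    have h2 : Real.exp (-t) * Real.exp t = 1 := by rw [← Real.exp_add]; simp
    nlinarith [Real.exp_pos t]
  · rw [abs_of_neg h, abs_of_nonpos (by linarith [Real.exp_le_one_iff.mpr h.le] : Real.exp t - 1 ≤ 0)]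
    have h1 : t + 1 ≤ Real.exp t := Real.add_one_le_exp _
    have h2 : 1 ≤ Real.exp (-t) := Real.one_le_exp (by linarith)
    nlinarith [Real.exp_pos t]

lemma aux_exp_split (s r : ℝ) (hr : 0 < r) : Real.exp s ≤ r + Real.exp (2 * s) / r := by
  rcases le_or_gt (Real.exp s) r with h | h
  · have : 0 ≤ Real.exp (2 * s) / r := div_nonneg (Real.exp_pos _).le hr.le
    linarith
  · have h2 : Real.exp (2 * s) = Real.exp s * Real.exp s := by rw [← Real.exp_add]; ring_nf
    have := Real.exp_pos s
    have h3 : Real.exp s ≤ Real.exp s * Real.exp s / r := by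
      rw [le_div_iff₀ hr]; nlinarith
    linarith [h2 ▸ h3]

/-- Domination of `V e^{(θ⋆/2)T}` by `√ε⁻¹ V + Vmax √ε e^{θ⋆ T}`. -/
lemma aux_dom (V Vmax T θstar sq : ℝ) (hV0 : 0 ≤ V) (hVle : V ≤ Vmax) (hs : 0 < sq) :
    V * Real.exp ((θstar / 2) * T) ≤ sq⁻¹ * V + (Vmax * sq) * Real.exp (θstar * T) := by
  have h1 := aux_exp_split ((θstar / 2) * T) sq⁻¹ (inv_pos.mpr hs)
  have h2 : (2:ℝ) * ((θstar / 2) * T) = θstar * T := by ring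
  rw [h2] at h1
  have h3 : Real.exp (θstar * T) / sq⁻¹ = sq * Real.exp (θstar * T) := by
    rw [div_eq_mul_inv, inv_inv, mul_comm]
  rw [h3] at h1
  have h4 := mul_le_mul_of_nonneg_left h1 hV0
  have h5 : V * (sq * Real.exp (θstar * T)) ≤ Vmax * (sq * Real.exp (θstar * T)) :=
    mul_le_mul_of_nonneg_right hVle (by positivity)
  nlinarith

/-- The central pointwise estimate. -/
lemma aux_pointwise (n : ℕ) (c : Fin n → ℝ) (hc_nonneg : ∀ i, 0 ≤ c i)
    (hcle1 : ∀ i, c i ≤ 1)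
    (θ θstar ε ε₀ Smax cmin : ℝ)
    (hθstar : 0 < θstar) (hεpos : 0 < ε) (hεε₀ : ε ≤ ε₀)
    (hεsmall : ε ≤ θstar * cmin / (4 * (|θ| + 1))) (hcmin : 0 < cmin)
    (hcmin_le : ∀ i, 0 < c i → cmin ≤ c i)
    (qpv uv : Fin n → ℝ) (hqpv : ∀ i, 0 ≤ qpv i)
    (hcompl : ∀ i, 0 < uv i → qpv i = 0)
    (hu : ∀ i, uv i ∈ Set.Icc 0 Smax) :
    |(Real.exp (θ * ε * ∑ i, c i * qpv i) - 1)
        * (Real.exp (-(θ * ε) * ∑ i, c i * uv i) - 1)|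
      ≤ ε ^ 2 * (|θ| ^ 2 * Real.exp (|θ| * ε₀ * (n * Smax)) * (4 / (θstar * cmin))) *
        ((∑ i, c i * uv i) *
          Real.exp ((θstar / 2) *
            Real.sqrt (∑ i, (qpv i - (∑ j, c j * qpv j) * c i) ^ 2))) := by
  set X : ℝ := ∑ i, c i * qpv i with hX_def
  set V : ℝ := ∑ i, c i * uv i with hV_def
  set T : ℝ := Real.sqrt (∑ i, (qpv i - X * c i) ^ 2) with hT_def
  set K₁ : ℝ := Real.exp (|θ| * ε₀ * (n * Smax)) with hK₁_def
  have hT0 : 0 ≤ T := Real.sqrt_nonneg _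
  have hK₁_pos : 0 < K₁ := Real.exp_pos _
  have hX0 : 0 ≤ X := Finset.sum_nonneg fun i _ => mul_nonneg (hc_nonneg i) (hqpv i)
  have hV0 : (0:ℝ) ≤ V := Finset.sum_nonneg fun i _ => mul_nonneg (hc_nonneg i) (hu i).1
  have hVle : V ≤ (n:ℝ) * Smax := by
    rw [hV_def]
    calc (∑ i, c i * uv i) ≤ ∑ _i : Fin n, Smax := by
          apply Finset.sum_le_sum
          intro i _
          calc c i * uv i ≤ 1 * Smax :=
                mul_le_mul (hcle1 i) (hu i).2 (hu i).1 one_pos.le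
            _ = Smax := one_mul _
      _ = n * Smax := by simp [mul_comm]
  -- factor 1: the unused-service factor
  have hfac1 : |Real.exp (-(θ * ε) * V) - 1| ≤ |θ| * ε * V * K₁ := by
    have h1 := aux_abs_exp_sub_one_le (-(θ * ε) * V)
    have habs : |(-(θ * ε) * V)| = |θ| * ε * V := by
      rw [abs_mul, abs_neg, abs_mul, abs_of_nonneg hεpos.le, abs_of_nonneg hV0]
    rw [habs] at h1
    refine h1.trans ?_
    have hmono : Real.exp (|θ| * ε * V) ≤ K₁ := by
      rw [hK₁_def]
      apply Real.exp_le_exp.mpr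
      apply mul_le_mul (by nlinarith [abs_nonneg θ]) hVle hV0
      exact mul_nonneg (abs_nonneg θ) (by linarith)
    exact mul_le_mul_of_nonneg_left hmono
      (mul_nonneg (mul_nonneg (abs_nonneg θ) hεpos.le) hV0)
  -- factor 2 (summed against V): the queue factor
  have hfac2 : V * |Real.exp (θ * ε * X) - 1|
      ≤ V * (|θ| * ε * (4 / (θstar * cmin)) * Real.exp ((θstar / 2) * T)) := by
    rw [hV_def, Finset.sum_mul, Finset.sum_mul]
    apply Finset.sum_le_sum
    intro i _
    rcases eq_or_lt_of_le (mul_nonneg (hc_nonneg i) (hu i).1) with hzero | hpos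
    · rw [← hzero, zero_mul, zero_mul]
    · -- positive term: c i > 0 and u i > 0
      have hci : 0 < c i := by
        rcases (hc_nonneg i).lt_or_eq with h | h
        · exact h
        · exfalso; rw [← h, zero_mul] at hpos; exact lt_irrefl _ hpos
      have hui : 0 < uv i := by
        rcases (hu i).1.lt_or_eq with h | h
        · exact h
        · exfalso; rw [← h, mul_zero] at hpos; exact lt_irrefl _ hpos
      have hqpi : qpv i = 0 := hcompl i hui
      -- hence X * c i ≤ T
      have hXci : X * c i ≤ T := by
        have hsq : (X * c i) ^ 2 ≤ ∑ j, (qpv j - X * c j) ^ 2 := by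
          have h1 := Finset.single_le_sum (f := fun j => (qpv j - X * c j) ^ 2)
            (fun j _ => sq_nonneg _) (Finset.mem_univ i)
          have h2 : (qpv i - X * c i) ^ 2 = (X * c i) ^ 2 := by rw [hqpi]; ring
          rw [← h2]; simpa using h1
        rw [hT_def]
        exact (Real.le_sqrt (mul_nonneg hX0 hci.le)
          (Finset.sum_nonneg fun j _ => sq_nonneg _)).mpr hsq
      have hXT : X ≤ T / cmin := by
        rw [le_div_iff₀ hcmin]
        calc X * cmin ≤ X * c i := mul_le_mul_of_nonneg_left (hcmin_le i hci) hX0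
          _ ≤ T := hXci
      -- |θ| ε X ≤ (θstar/4) T
      have h1 : |θ| * ε ≤ θstar * cmin / 4 := by
        have h2 : |θ| * ε ≤ |θ| * (θstar * cmin / (4 * (|θ| + 1))) :=
          mul_le_mul_of_nonneg_left hεsmall (abs_nonneg θ)
        have h3 : |θ| * (θstar * cmin / (4 * (|θ| + 1))) ≤ θstar * cmin / 4 := by
          rw [mul_div_assoc', div_le_div_iff₀ (by positivity) (by norm_num : (0:ℝ) < 4)]
          nlinarith [abs_nonneg θ, mul_pos hθstar hcmin]
        linarith
      have hsmall : |θ| * ε * X ≤ (θstar / 4) * T := by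
        calc |θ| * ε * X ≤ (θstar * cmin / 4) * (T / cmin) := by
              apply mul_le_mul h1 hXT hX0
              exact div_nonneg (mul_nonneg hθstar.le hcmin.le) (by norm_num)
          _ = (θstar / 4) * T := by field_simp
      -- the exponential bound
      have hbound : |Real.exp (θ * ε * X) - 1|
          ≤ |θ| * ε * (4 / (θstar * cmin)) * Real.exp ((θstar / 2) * T) := by
        have ha := aux_abs_exp_sub_one_le (θ * ε * X)
        have habs : |θ * ε * X| = |θ| * ε * X := by
          rw [abs_mul, abs_mul, abs_of_nonneg hεpos.le, abs_of_nonneg hX0]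
        rw [habs] at ha
        have h2 : Real.exp (|θ| * ε * X) ≤ Real.exp ((θstar / 4) * T) :=
          Real.exp_le_exp.mpr hsmall
        have h3 : |θ| * ε * X ≤ |θ| * ε * (T / cmin) :=
          mul_le_mul_of_nonneg_left hXT (mul_nonneg (abs_nonneg θ) hεpos.le)
        have h4 : T * Real.exp ((θstar / 4) * T)
            ≤ (4 / θstar) * Real.exp ((θstar / 2) * T) := by
          have h5 : (θstar / 4) * T ≤ Real.exp ((θstar / 4) * T) := by
            linarith [Real.add_one_le_exp ((θstar / 4) * T)]
          have h6 : Real.exp ((θstar / 4) * T) * Real.exp ((θstar / 4) * T)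
              = Real.exp ((θstar / 2) * T) := by
            rw [← Real.exp_add]; ring_nf
          have h7 : T ≤ (4 / θstar) * Real.exp ((θstar / 4) * T) := by
            have h8 := mul_le_mul_of_nonneg_left h5
              (le_of_lt (by positivity : (0:ℝ) < 4 / θstar))
            have h9 : (4 / θstar) * ((θstar / 4) * T) = T := by field_simp
            linarith [h9 ▸ h8]
          calc T * Real.exp ((θstar / 4) * T)
              ≤ ((4 / θstar) * Real.exp ((θstar / 4) * T)) * Real.exp ((θstar / 4) * T) :=
                mul_le_mul_of_nonneg_right h7 (Real.exp_pos _).le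
            _ = (4 / θstar) * (Real.exp ((θstar / 4) * T) * Real.exp ((θstar / 4) * T)) := by
                ring
            _ = (4 / θstar) * Real.exp ((θstar / 2) * T) := by rw [h6]
        calc |Real.exp (θ * ε * X) - 1| ≤ |θ| * ε * X * Real.exp (|θ| * ε * X) := ha
          _ ≤ |θ| * ε * (T / cmin) * Real.exp ((θstar / 4) * T) := by
              apply mul_le_mul h3 h2 (Real.exp_pos _).le
              exact mul_nonneg (mul_nonneg (abs_nonneg θ) hεpos.le)
                (div_nonneg hT0 hcmin.le)
          _ = (|θ| * ε / cmin) * (T * Real.exp ((θstar / 4) * T)) := by ring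
          _ ≤ (|θ| * ε / cmin) * ((4 / θstar) * Real.exp ((θstar / 2) * T)) := by
              apply mul_le_mul_of_nonneg_left h4
              exact div_nonneg (mul_nonneg (abs_nonneg θ) hεpos.le) hcmin.le
          _ = |θ| * ε * (4 / (θstar * cmin)) * Real.exp ((θstar / 2) * T) := by
              field_simp
      exact mul_le_mul_of_nonneg_left hbound (mul_nonneg (hc_nonneg i) (hu i).1)
  -- combine the two factors
  rw [abs_mul]
  calc |Real.exp (θ * ε * X) - 1| * |Real.exp (-(θ * ε) * V) - 1|
      ≤ |Real.exp (θ * ε * X) - 1| * (|θ| * ε * V * K₁) :=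
        mul_le_mul_of_nonneg_left hfac1 (abs_nonneg _)
    _ = (|θ| * ε * K₁) * (V * |Real.exp (θ * ε * X) - 1|) := by ring
    _ ≤ (|θ| * ε * K₁) * (V * (|θ| * ε * (4 / (θstar * cmin))
          * Real.exp ((θstar / 2) * T))) := by
        apply mul_le_mul_of_nonneg_left hfac2
        exact mul_nonneg (mul_nonneg (abs_nonneg θ) hεpos.le) hK₁_pos.le
    _ = ε ^ 2 * (|θ| ^ 2 * K₁ * (4 / (θstar * cmin)))
          * (V * Real.exp ((θstar / 2) * T)) := by ring

/-- The state-space-collapse test function `x ↦ exp(θ⋆ ‖x⊥‖)`. -/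
noncomputable def sscF (n : ℕ) (c : Fin n → ℝ) (θstar : ℝ) : (Fin n → ℝ) → ℝ :=
  fun x => Real.exp (θstar * Real.sqrt (∑ i, (x i - (∑ j, c j * x j) * c i) ^ 2))

lemma sscF_measurable (n : ℕ) (c : Fin n → ℝ) (θstar : ℝ) :
    Measurable (sscF n c θstar) := by
  unfold sscF
  apply Real.measurable_exp.comp
  apply Measurable.const_mul
  apply Real.continuous_sqrt.measurable.comp
  apply Finset.measurable_sum
  intro i _
  exact ((measurable_pi_apply i).sub
    ((Finset.measurable_sum _ fun j _ =>
      by fun_prop).mul_const (c i))).pow_const 2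

set_option maxHeartbeats 1000000 in
/-- Key `o(ε²)` estimate for the generalized switch: under the exponential state
space collapse bound, for every `θ ∈ ℝ`,
`E[(e^{θε⟨c,q_ε⁺⟩} − 1)(e^{−θε⟨c,u_ε⟩} − 1)]` is `o(ε²)` as `ε → 0⁺`. -/
theorem stmt13
    (n : ℕ) (hn : 1 ≤ n) (c : Fin n → ℝ)
    (hc_nonneg : ∀ i, 0 ≤ c i) (hc_norm : Real.sqrt (∑ i, c i ^ 2) = 1)
    (Smax θstar Cstar ε₀ : ℝ)
    (hS : 0 < Smax) (hθstar : 0 < θstar) (hε₀ : 0 < ε₀)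
    (Ω : ℝ → Type) [∀ ε, MeasurableSpace (Ω ε)]
    (P : ∀ ε, Measure (Ω ε)) [∀ ε, IsProbabilityMeasure (P ε)]
    (q a s qp u : ∀ ε, Ω ε → Fin n → ℝ)
    (hmq : ∀ ε, Measurable (q ε)) (hma : ∀ ε, Measurable (a ε))
    (hms : ∀ ε, Measurable (s ε))
    (hqp_def : ∀ ε ω i, qp ε ω i = max (q ε ω i + a ε ω i - s ε ω i) 0)
    (hu_def : ∀ ε ω i, u ε ω i = qp ε ω i - (q ε ω i + a ε ω i - s ε ω i))
    (hq0 : ∀ ε ∈ Set.Ioo 0 ε₀, ∀ᵐ ω ∂(P ε), ∀ i, 0 ≤ q ε ω i)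
    (hu_bdd : ∀ ε ∈ Set.Ioo 0 ε₀, ∀ᵐ ω ∂(P ε), ∀ i, u ε ω i ∈ Set.Icc 0 Smax)
    (hEu : ∀ ε ∈ Set.Ioo 0 ε₀, (∫ ω, (∑ i, c i * u ε ω i) ∂(P ε)) ≤ ε)
    (hstat : ∀ ε ∈ Set.Ioo 0 ε₀,
      Measure.map (qp ε) (P ε) = Measure.map (q ε) (P ε))
    (hSSC_int : ∀ ε ∈ Set.Ioo 0 ε₀,
      Integrable (fun ω => Real.exp (θstar *
        Real.sqrt (∑ i, (q ε ω i - (∑ j, c j * q ε ω j) * c i) ^ 2))) (P ε))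
    (hSSC_bdd : ∀ ε ∈ Set.Ioo 0 ε₀,
      (∫ ω, Real.exp (θstar *
        Real.sqrt (∑ i, (q ε ω i - (∑ j, c j * q ε ω j) * c i) ^ 2)) ∂(P ε))
        ≤ Cstar) :
    ∀ θ : ℝ,
      Tendsto (fun ε =>
          (∫ ω, (Real.exp (θ * ε * ∑ i, c i * qp ε ω i) - 1)
            * (Real.exp (-(θ * ε) * ∑ i, c i * u ε ω i) - 1) ∂(P ε)) / ε ^ 2)
        (𝓝[>] 0) (𝓝 0) := by
  intro θ
  have hsum : (∑ i, c i ^ 2) = 1 := by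
    have h0 : (0:ℝ) ≤ ∑ i, c i ^ 2 := Finset.sum_nonneg fun i _ => sq_nonneg _
    nlinarith [Real.sq_sqrt h0, hc_norm]
  have hcle1 : ∀ i, c i ≤ 1 := by
    intro i
    have h1 : c i ^ 2 ≤ ∑ j, c j ^ 2 :=
      Finset.single_le_sum (f := fun j => c j ^ 2) (fun j _ => sq_nonneg _) (Finset.mem_univ i)
    nlinarith [hc_nonneg i]
  haveI : Nonempty (Fin n) := Fin.pos_iff_nonempty.mp hn
  set cmin : ℝ := Finset.univ.inf' Finset.univ_nonempty (fun i => if 0 < c i then c i else 1)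
    with hcmin_def
  have hcmin_pos : 0 < cmin := by
    rw [hcmin_def, Finset.lt_inf'_iff]
    intro i _
    split <;> [assumption; norm_num]
  have hcmin_le : ∀ i, 0 < c i → cmin ≤ c i := by
    intro i hi
    have h := Finset.inf'_le (f := fun i => if 0 < c i then c i else 1) (Finset.mem_univ i)
    simp only [if_pos hi] at h
    exact h
  have hnpos : (0:ℝ) < n := by exact_mod_cast hn
  have hB : 0 ≤ |θ| ^ 2 * Real.exp (|θ| * ε₀ * ((n:ℝ) * Smax)) * (4 / (θstar * cmin)) := by
    apply mul_nonneg (mul_nonneg (sq_nonneg _) (Real.exp_pos _).le)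
    exact div_nonneg (by norm_num) (mul_nonneg hθstar.le hcmin_pos.le)
  have hδpos : 0 < min ε₀ (θstar * cmin / (4 * (|θ| + 1))) := by
    apply lt_min hε₀
    positivity
  apply squeeze_zero_norm'
    (a := fun ε => |θ| ^ 2 * Real.exp (|θ| * ε₀ * ((n:ℝ) * Smax)) * (4 / (θstar * cmin))
      * (1 + (n:ℝ) * Smax * Cstar) * Real.sqrt ε)
  · filter_upwards [Ioo_mem_nhdsGT_of_mem (Set.left_mem_Ico.mpr hδpos)] with ε hεδ
    have hεpos : 0 < ε := hεδ.1
    have hε : ε ∈ Set.Ioo 0 ε₀ := ⟨hεpos, lt_of_lt_of_le hεδ.2 (min_le_left _ _)⟩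
    have hεε₀ : ε ≤ ε₀ := hε.2.le
    have hεsmall : ε ≤ θstar * cmin / (4 * (|θ| + 1)) :=
      (le_of_lt hεδ.2).trans (min_le_right _ _)
    have hsqrt_pos : 0 < Real.sqrt ε := Real.sqrt_pos.mpr hεpos
    -- measurability of qp and u
    have hmqp : Measurable (qp ε) := by
      have hqpe : qp ε = fun ω i => max (q ε ω i + a ε ω i - s ε ω i) 0 :=
        funext fun ω => funext fun i => hqp_def ε ω i
      rw [hqpe]
      apply measurable_pi_lambda
      intro i
      exact ((((measurable_pi_apply i).comp (hmq ε)).add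
        ((measurable_pi_apply i).comp (hma ε))).sub
        ((measurable_pi_apply i).comp (hms ε))).max measurable_const
    have hmu : Measurable (u ε) := by
      have hue : u ε = fun ω i => qp ε ω i - (q ε ω i + a ε ω i - s ε ω i) :=
        funext fun ω => funext fun i => hu_def ε ω i
      rw [hue]
      apply measurable_pi_lambda
      intro i
      exact ((measurable_pi_apply i).comp hmqp).sub
        ((((measurable_pi_apply i).comp (hmq ε)).add
          ((measurable_pi_apply i).comp (hma ε))).sub
          ((measurable_pi_apply i).comp (hms ε)))
    have hmV : Measurable fun ω => ∑ i, c i * u ε ω i := by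
      apply Finset.measurable_sum
      intro i _
      exact ((measurable_pi_apply i).comp hmu).const_mul (c i)
    have hFm := sscF_measurable n c θstar
    have hint_F : Integrable (fun ω => sscF n c θstar (qp ε ω)) (P ε) := by
      have h1 : Integrable (sscF n c θstar) (Measure.map (q ε) (P ε)) :=
        (integrable_map_measure hFm.aestronglyMeasurable (hmq ε).aemeasurable).mpr
          (hSSC_int ε hε)
      have h2 : Integrable (sscF n c θstar) (Measure.map (qp ε) (P ε)) := by
        rw [hstat ε hε]; exact h1
      exact (integrable_map_measure hFm.aestronglyMeasurable hmqp.aemeasurable).mp h2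
    have hIF : (∫ ω, sscF n c θstar (qp ε ω) ∂(P ε)) ≤ Cstar := by
      have h1 : (∫ ω, sscF n c θstar (qp ε ω) ∂(P ε))
          = ∫ x, sscF n c θstar x ∂(Measure.map (qp ε) (P ε)) :=
        (integral_map hmqp.aemeasurable hFm.aestronglyMeasurable).symm
      have h2 : (∫ x, sscF n c θstar x ∂(Measure.map (q ε) (P ε)))
          = ∫ ω, sscF n c θstar (q ε ω) ∂(P ε) :=
        integral_map (hmq ε).aemeasurable hFm.aestronglyMeasurable
      rw [h1, hstat ε hε, h2]
      exact hSSC_bdd ε hε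
    have hVbd : ∀ᵐ ω ∂(P ε), ‖∑ i, c i * u ε ω i‖ ≤ (n:ℝ) * Smax := by
      filter_upwards [hu_bdd ε hε] with ω hω
      have h0 : (0:ℝ) ≤ ∑ i, c i * u ε ω i :=
        Finset.sum_nonneg fun i _ => mul_nonneg (hc_nonneg i) (hω i).1
      rw [Real.norm_eq_abs, abs_of_nonneg h0]
      calc (∑ i, c i * u ε ω i) ≤ ∑ _i : Fin n, Smax := by
            apply Finset.sum_le_sum
            intro i _
            calc c i * u ε ω i ≤ 1 * Smax :=
                  mul_le_mul (hcle1 i) (hω i).2 (hω i).1 one_pos.le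
              _ = Smax := one_mul _
        _ = n * Smax := by simp [mul_comm]
    have hint_V : Integrable (fun ω => ∑ i, c i * u ε ω i) (P ε) :=
      (integrable_const ((n:ℝ) * Smax)).mono' hmV.aestronglyMeasurable hVbd
    -- the pointwise a.e. bound
    have hae : ∀ᵐ ω ∂(P ε),
        ‖(Real.exp (θ * ε * ∑ i, c i * qp ε ω i) - 1)
          * (Real.exp (-(θ * ε) * ∑ i, c i * u ε ω i) - 1)‖
        ≤ ε ^ 2 * (|θ| ^ 2 * Real.exp (|θ| * ε₀ * ((n:ℝ) * Smax)) * (4 / (θstar * cmin))) *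
            ((Real.sqrt ε)⁻¹ * (∑ i, c i * u ε ω i)
              + ((n:ℝ) * Smax * Real.sqrt ε) * sscF n c θstar (qp ε ω)) := by
      filter_upwards [hu_bdd ε hε] with ω hω
      have hqpv : ∀ i, 0 ≤ qp ε ω i := fun i => by
        rw [hqp_def]; exact le_max_right _ _
      have hcompl : ∀ i, 0 < u ε ω i → qp ε ω i = 0 := by
        intro i hui
        rcases le_or_gt 0 (q ε ω i + a ε ω i - s ε ω i) with hv | hv
        · exfalso
          have h0 : u ε ω i = 0 := by
            rw [hu_def, hqp_def, max_eq_left hv, sub_self]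
          rw [h0] at hui; exact lt_irrefl _ hui
        · rw [hqp_def]; exact max_eq_right hv.le
      have h1 := aux_pointwise n c hc_nonneg hcle1 θ θstar ε ε₀ Smax cmin hθstar hεpos
        hεε₀ hεsmall hcmin_pos hcmin_le (qp ε ω) (u ε ω) hqpv hcompl hω
      have hV0 : (0:ℝ) ≤ ∑ i, c i * u ε ω i :=
        Finset.sum_nonneg fun i _ => mul_nonneg (hc_nonneg i) (hω i).1
      have hVle : (∑ i, c i * u ε ω i) ≤ (n:ℝ) * Smax := by
        calc (∑ i, c i * u ε ω i) ≤ ∑ _i : Fin n, Smax := by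
              apply Finset.sum_le_sum
              intro i _
              calc c i * u ε ω i ≤ 1 * Smax :=
                    mul_le_mul (hcle1 i) (hω i).2 (hω i).1 one_pos.le
                _ = Smax := one_mul _
          _ = n * Smax := by simp [mul_comm]
      have h2 := aux_dom (∑ i, c i * u ε ω i) ((n:ℝ) * Smax)
        (Real.sqrt (∑ i, (qp ε ω i - (∑ j, c j * qp ε ω j) * c i) ^ 2))
        θstar (Real.sqrt ε) hV0 hVle hsqrt_pos
      rw [Real.norm_eq_abs]
      refine h1.trans ?_
      have h3 : sscF n c θstar (qp ε ω) = Real.exp (θstar *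
          Real.sqrt (∑ i, (qp ε ω i - (∑ j, c j * qp ε ω j) * c i) ^ 2)) := rfl
      rw [h3]
      exact mul_le_mul_of_nonneg_left h2 (by positivity)
    -- integrate the bound
    have hint_g : Integrable (fun ω =>
        ε ^ 2 * (|θ| ^ 2 * Real.exp (|θ| * ε₀ * ((n:ℝ) * Smax)) * (4 / (θstar * cmin))) *
          ((Real.sqrt ε)⁻¹ * (∑ i, c i * u ε ω i)
            + ((n:ℝ) * Smax * Real.sqrt ε) * sscF n c θstar (qp ε ω))) (P ε) :=
      (((hint_V.const_mul _).add (hint_F.const_mul _)).const_mul _)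
    have hnorm1 : ‖∫ ω, (Real.exp (θ * ε * ∑ i, c i * qp ε ω i) - 1)
        * (Real.exp (-(θ * ε) * ∑ i, c i * u ε ω i) - 1) ∂(P ε)‖
        ≤ ∫ ω, ε ^ 2 * (|θ| ^ 2 * Real.exp (|θ| * ε₀ * ((n:ℝ) * Smax)) * (4 / (θstar * cmin))) *
          ((Real.sqrt ε)⁻¹ * (∑ i, c i * u ε ω i)
            + ((n:ℝ) * Smax * Real.sqrt ε) * sscF n c θstar (qp ε ω)) ∂(P ε) := by
      refine (norm_integral_le_integral_norm _).trans ?_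
      exact integral_mono_of_nonneg (ae_of_all _ fun ω => norm_nonneg _) hint_g hae
    have hIg : (∫ ω, ε ^ 2 * (|θ| ^ 2 * Real.exp (|θ| * ε₀ * ((n:ℝ) * Smax))
            * (4 / (θstar * cmin))) *
          ((Real.sqrt ε)⁻¹ * (∑ i, c i * u ε ω i)
            + ((n:ℝ) * Smax * Real.sqrt ε) * sscF n c θstar (qp ε ω)) ∂(P ε))
        ≤ ε ^ 2 * (|θ| ^ 2 * Real.exp (|θ| * ε₀ * ((n:ℝ) * Smax)) * (4 / (θstar * cmin))
            * (1 + (n:ℝ) * Smax * Cstar) * Real.sqrt ε) := by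
      rw [integral_const_mul, integral_add (hint_V.const_mul _) (hint_F.const_mul _),
        integral_const_mul, integral_const_mul]
      have h1 : (Real.sqrt ε)⁻¹ * (∫ ω, (∑ i, c i * u ε ω i) ∂(P ε)) ≤ Real.sqrt ε := by
        have h2 : (Real.sqrt ε)⁻¹ * (∫ ω, (∑ i, c i * u ε ω i) ∂(P ε))
            ≤ (Real.sqrt ε)⁻¹ * ε :=
          mul_le_mul_of_nonneg_left (hEu ε hε) (inv_pos.mpr hsqrt_pos).le
        have h3 : (Real.sqrt ε)⁻¹ * ε = Real.sqrt ε := by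
          rw (occs := .pos [2]) [← Real.mul_self_sqrt hεpos.le]
          field_simp
        linarith [h3 ▸ h2]
      have h4 : ((n:ℝ) * Smax * Real.sqrt ε) * (∫ ω, sscF n c θstar (qp ε ω) ∂(P ε))
          ≤ ((n:ℝ) * Smax * Real.sqrt ε) * Cstar :=
        mul_le_mul_of_nonneg_left hIF (by positivity)
      have h5 : (Real.sqrt ε)⁻¹ * (∫ ω, (∑ i, c i * u ε ω i) ∂(P ε))
          + ((n:ℝ) * Smax * Real.sqrt ε) * (∫ ω, sscF n c θstar (qp ε ω) ∂(P ε))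
          ≤ Real.sqrt ε + (n:ℝ) * Smax * Real.sqrt ε * Cstar := by linarith
      calc ε ^ 2 * (|θ| ^ 2 * Real.exp (|θ| * ε₀ * ((n:ℝ) * Smax)) * (4 / (θstar * cmin))) *
            ((Real.sqrt ε)⁻¹ * (∫ ω, (∑ i, c i * u ε ω i) ∂(P ε))
              + ((n:ℝ) * Smax * Real.sqrt ε) * (∫ ω, sscF n c θstar (qp ε ω) ∂(P ε)))
          ≤ ε ^ 2 * (|θ| ^ 2 * Real.exp (|θ| * ε₀ * ((n:ℝ) * Smax)) * (4 / (θstar * cmin))) *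
            (Real.sqrt ε + (n:ℝ) * Smax * Real.sqrt ε * Cstar) := by
            apply mul_le_mul_of_nonneg_left h5
            exact mul_nonneg (sq_nonneg _) hB
        _ = ε ^ 2 * (|θ| ^ 2 * Real.exp (|θ| * ε₀ * ((n:ℝ) * Smax)) * (4 / (θstar * cmin))
              * (1 + (n:ℝ) * Smax * Cstar) * Real.sqrt ε) := by ring
    rw [norm_div, Real.norm_eq_abs (ε ^ 2), abs_of_nonneg (sq_nonneg ε)]
    rw [div_le_iff₀ (by positivity : (0:ℝ) < ε ^ 2)]
    calc ‖∫ ω, (Real.exp (θ * ε * ∑ i, c i * qp ε ω i) - 1)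
          * (Real.exp (-(θ * ε) * ∑ i, c i * u ε ω i) - 1) ∂(P ε)‖
        ≤ _ := hnorm1
      _ ≤ ε ^ 2 * (|θ| ^ 2 * Real.exp (|θ| * ε₀ * ((n:ℝ) * Smax)) * (4 / (θstar * cmin))
            * (1 + (n:ℝ) * Smax * Cstar) * Real.sqrt ε) := hIg
      _ = |θ| ^ 2 * Real.exp (|θ| * ε₀ * ((n:ℝ) * Smax)) * (4 / (θstar * cmin))
            * (1 + (n:ℝ) * Smax * Cstar) * Real.sqrt ε * ε ^ 2 := by ring
  · have h1 : Tendsto (fun ε : ℝ =>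
        |θ| ^ 2 * Real.exp (|θ| * ε₀ * ((n:ℝ) * Smax)) * (4 / (θstar * cmin))
          * (1 + (n:ℝ) * Smax * Cstar) * Real.sqrt ε) (𝓝 0)
        (𝓝 (|θ| ^ 2 * Real.exp (|θ| * ε₀ * ((n:ℝ) * Smax)) * (4 / (θstar * cmin))
          * (1 + (n:ℝ) * Smax * Cstar) * Real.sqrt 0)) :=
      (continuous_const.mul Real.continuous_sqrt).tendsto 0
    simpa using h1.mono_left nhdsWithin_le_nhds
end
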